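/- arXiv:2412.08834 — 2 statements merged into one kernel-verified Lean document; each statement's English description precedes it below -/
import Mathlib

section
/- Let a, b, m be as above (m'' + b m' = a² m, a > 0, b ≥ 0, continuous) and suppose there exists t₀ ≥ 0 with e^{B(t₀)} m'(t₀) m(t₀) < 0. Then for all t ∈ [0, t₀], m(t) ≠ 0 and m'(t) ≠ 0; in particular m and m' each have constant sign on [0, t₀]. -/
open MeasureTheory Real Set

/-- A continuous nonvanishing function on an interval has constant sign. -/
lemma sign_const_aux {f : ℝ → ℝ} {t₀ : ℝ} (hf : ContinuousOn f (Icc 0 t₀))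
    (hne : ∀ t ∈ Icc 0 t₀, f t ≠ 0) :
    (∀ t ∈ Icc 0 t₀, 0 < f t) ∨ (∀ t ∈ Icc 0 t₀, f t < 0) := by
  by_contra h
  push_neg at h
  obtain ⟨⟨t₁, ht₁, h₁⟩, ⟨t₂, ht₂, h₂⟩⟩ := h
  have h₁' : f t₁ < 0 := lt_of_le_of_ne h₁ (hne t₁ ht₁)
  have h₂' : 0 < f t₂ := lt_of_le_of_ne h₂ (Ne.symm (hne t₂ ht₂))
  have hsub : uIcc t₁ t₂ ⊆ Icc 0 t₀ := uIcc_subset_Icc ht₁ ht₂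
  have := intermediate_value_uIcc (hf.mono hsub)
  have h0 : (0:ℝ) ∈ uIcc (f t₁) (f t₂) := by
    rw [mem_uIcc]; left; exact ⟨h₁'.le, h₂'.le⟩
  obtain ⟨c, hc, hc0⟩ := this h0
  exact hne c (hsub hc) hc0

theorem stmt_8 (a b m : ℝ → ℝ) (ha_cont : Continuous a) (ha_pos : ∀ t, 0 < a t)
    (hb_cont : Continuous b) (hb_nonneg : ∀ t, 0 ≤ b t)
    (hm : ContDiff ℝ 2 m)
    (hode : ∀ t ≥ (0:ℝ), deriv (deriv m) t + b t * deriv m t = (a t) ^ 2 * m t)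
    (B : ℝ → ℝ) (hB : ∀ t, B t = ∫ r in (0:ℝ)..t, b r)
    (t₀ : ℝ) (ht₀ : 0 ≤ t₀)
    (hneg : Real.exp (B t₀) * deriv m t₀ * m t₀ < 0) :
    (∀ t ∈ Icc 0 t₀, m t ≠ 0 ∧ deriv m t ≠ 0) ∧
    ((∀ t ∈ Icc 0 t₀, 0 < m t) ∨ (∀ t ∈ Icc 0 t₀, m t < 0)) ∧
    ((∀ t ∈ Icc 0 t₀, 0 < deriv m t) ∨ (∀ t ∈ Icc 0 t₀, deriv m t < 0)) := by
  have hm1 : Differentiable ℝ m := hm.differentiable (by norm_num)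
  have hm2 : ContDiff ℝ 1 (deriv m) := by
    have := (contDiff_succ_iff_deriv.mp (by norm_num at hm ⊢; exact hm : ContDiff ℝ (1+1) m)).2
    exact this.2
  have hm2' : Differentiable ℝ (deriv m) := hm2.differentiable (by norm_num)
  -- derivative of B
  have hBder : ∀ t, HasDerivAt B (b t) t := by
    intro t
    have hfun : B = fun t => ∫ r in (0:ℝ)..t, b r := funext hB
    rw [hfun]
    exact intervalIntegral.integral_hasDerivAt_right (hb_cont.intervalIntegrable 0 t)
      (hb_cont.stronglyMeasurableAtFilter _ _) hb_cont.continuousAt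
  set g : ℝ → ℝ := fun t => Real.exp (B t) * (deriv m t * m t) with hg
  have hgder : ∀ t, HasDerivAt g
      (Real.exp (B t) * b t * (deriv m t * m t) +
        Real.exp (B t) * (deriv (deriv m) t * m t + deriv m t * deriv m t)) t := by
    intro t
    exact ((hBder t).exp.mul (((hm2' t).hasDerivAt).mul ((hm1 t).hasDerivAt)))
  have hgmono : MonotoneOn g (Icc 0 t₀) := by
    apply monotoneOn_of_deriv_nonneg (convex_Icc _ _)
    · have hBcont : Continuous B := (Differentiable.continuous fun t => (hBder t).differentiableAt)
      exact ((Real.continuous_exp.comp hBcont).mul (hm2'.continuous.mul hm1.continuous)).continuousOn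
    · intro x hx
      exact ((hgder x).differentiableAt).differentiableWithinAt
    · intro x hx
      rw [interior_Icc] at hx
      rw [(hgder x).deriv]
      have hxpos : (0:ℝ) < x := hx.1
      have hode' := hode x hxpos.le
      have hdd : deriv (deriv m) x = (a x)^2 * m x - b x * deriv m x := by linarith
      rw [hdd]
      have : Real.exp (B x) * b x * (deriv m x * m x) +
          Real.exp (B x) * (((a x)^2 * m x - b x * deriv m x) * m x + deriv m x * deriv m x)
          = Real.exp (B x) * ((a x)^2 * (m x)^2 + (deriv m x)^2) := by ring
      rw [this]
      positivity
  have hgneg : ∀ t ∈ Icc 0 t₀, deriv m t * m t < 0 := by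
    intro t ht
    have h1 : g t ≤ g t₀ := hgmono ht ⟨ht₀, le_rfl⟩ ht.2
    have h2 : g t₀ < 0 := by rw [hg]; simpa [mul_assoc] using hneg
    have h3 : g t < 0 := lt_of_le_of_lt h1 h2
    have h3' : Real.exp (B t) * (deriv m t * m t) < 0 := h3
    by_contra hc
    push_neg at hc
    exact absurd h3' (not_lt.mpr (mul_nonneg (Real.exp_pos _).le hc))
  have hne : ∀ t ∈ Icc 0 t₀, m t ≠ 0 ∧ deriv m t ≠ 0 := by
    intro t ht
    have := hgneg t ht
    constructor
    · intro h0; rw [h0, mul_zero] at this; exact lt_irrefl 0 this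
    · intro h0; rw [h0, zero_mul] at this; exact lt_irrefl 0 this
  refine ⟨hne, ?_, ?_⟩
  · exact sign_const_aux hm1.continuous.continuousOn (fun t ht => (hne t ht).1)
  · exact sign_const_aux hm2'.continuous.continuousOn (fun t ht => (hne t ht).2)
end

section
/- Let φ(x) = ∫_{S^{N-1}} e^{x·ω} dS(ω) with N ≥ 2. Then there exists a constant C > 0 such that for all x ∈ ℝ^N, φ(x) ≤ C e^{|x|} (1+|x|)^{-(N-1)/2}. -/
open MeasureTheory Real Set

section YZaux
open Metric Module
open scoped NNReal ENNReal

variable {N : ℕ}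

noncomputable def gmap (p : EuclideanSpace ℝ (Fin N)) :
    ((ℝ ∙ p)ᗮ : Submodule ℝ (EuclideanSpace ℝ (Fin N))) → EuclideanSpace ℝ (Fin N) :=
  fun y => (y : EuclideanSpace ℝ (Fin N)) + Real.sqrt (1 - ‖y‖^2) • p

set_option maxHeartbeats 1000000 in
lemma gmap_lip (p : EuclideanSpace ℝ (Fin N)) (hp : ‖p‖ = 1) :
    LipschitzOnWith 3 (gmap p) (closedBall 0 (3/4)) := by
  apply LipschitzOnWith.of_dist_le_mul
  intro y hy z hz
  rw [mem_closedBall, dist_zero_right] at hy hz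
  have hy1 : ‖y‖^2 ≤ (3/4)^2 := pow_le_pow_left₀ (norm_nonneg _) hy 2
  have hz1 : ‖z‖^2 ≤ (3/4)^2 := pow_le_pow_left₀ (norm_nonneg _) hz 2
  set a := 1 - ‖y‖^2 with ha
  set b := 1 - ‖z‖^2 with hb
  have ha0 : 7/16 ≤ a := by simp only [ha]; nlinarith
  have hb0 : 7/16 ≤ b := by simp only [hb]; nlinarith
  have hsa : Real.sqrt a ≥ 5/8 := by
    rw [ge_iff_le, show (5/8 : ℝ) = Real.sqrt ((5/8)^2) by rw [Real.sqrt_sq]; norm_num]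
    apply Real.sqrt_le_sqrt; nlinarith
  have hsb : Real.sqrt b ≥ 5/8 := by
    rw [ge_iff_le, show (5/8 : ℝ) = Real.sqrt ((5/8)^2) by rw [Real.sqrt_sq]; norm_num]
    apply Real.sqrt_le_sqrt; nlinarith
  have hd : dist (gmap p y) (gmap p z)
      ≤ ‖y - z‖ + |Real.sqrt a - Real.sqrt b| := by
    rw [dist_eq_norm]
    have hcoe : ‖(y : EuclideanSpace ℝ (Fin N))‖ = ‖y‖ := rfl
    have hcoez : ‖(z : EuclideanSpace ℝ (Fin N))‖ = ‖z‖ := rfl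
    have : gmap p y - gmap p z = ((y - z : ((ℝ ∙ p)ᗮ : Submodule ℝ (EuclideanSpace ℝ (Fin N)))) : EuclideanSpace ℝ (Fin N))
        + (Real.sqrt a - Real.sqrt b) • p := by
      simp only [gmap, ha, hb, sub_smul, Submodule.coe_sub, hcoe, hcoez]
      abel
    rw [this]
    refine (norm_add_le _ _).trans ?_
    rw [norm_smul, hp, mul_one, Submodule.coe_norm]
    simp
  have key : |Real.sqrt a - Real.sqrt b| ≤ (6/5) * ‖y - z‖ := by
    have hsum : Real.sqrt a + Real.sqrt b ≥ 5/4 := by linarith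
    have hmul : (Real.sqrt a - Real.sqrt b) * (Real.sqrt a + Real.sqrt b) = a - b := by
      have h1 : Real.sqrt a ^ 2 = a := Real.sq_sqrt (by linarith)
      have h2 : Real.sqrt b ^ 2 = b := Real.sq_sqrt (by linarith)
      nlinarith [h1, h2]
    have hab : |a - b| ≤ (3/2) * ‖y - z‖ := by
      have h3 : a - b = (‖z‖ - ‖y‖) * (‖z‖ + ‖y‖) := by rw [ha, hb]; ring
      rw [h3, abs_mul]
      have h4 : |‖z‖ - ‖y‖| ≤ ‖y - z‖ := by
        rw [abs_sub_comm]
        exact abs_norm_sub_norm_le y z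
      have h5 : |‖z‖ + ‖y‖| ≤ 3/2 := by
        rw [abs_of_nonneg (by positivity)]; linarith
      calc |‖z‖ - ‖y‖| * |‖z‖ + ‖y‖| ≤ ‖y - z‖ * (3/2) :=
            mul_le_mul h4 h5 (abs_nonneg _) (norm_nonneg _)
        _ = (3/2) * ‖y - z‖ := by ring
    have h6 : |Real.sqrt a - Real.sqrt b| * (5/4) ≤ |a - b| := by
      calc |Real.sqrt a - Real.sqrt b| * (5/4)
          ≤ |Real.sqrt a - Real.sqrt b| * (Real.sqrt a + Real.sqrt b) :=
            mul_le_mul_of_nonneg_left hsum (abs_nonneg _)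
        _ = |a - b| := by
            rw [← abs_of_nonneg (show (0:ℝ) ≤ Real.sqrt a + Real.sqrt b by linarith),
              ← abs_mul, hmul]
    linarith
  have hdyz : dist y z = ‖y - z‖ := dist_eq_norm _ _
  rw [hdyz]
  push_cast
  linarith [norm_nonneg (y - z)]

set_option maxHeartbeats 1000000 in
lemma cap_subset (p : EuclideanSpace ℝ (Fin N)) (hp : ‖p‖ = 1) {t : ℝ} (ht0 : 0 ≤ t)
    (ht : t ≤ 3/4) :
    sphere (0 : EuclideanSpace ℝ (Fin N)) 1 ∩ closedBall p t ⊆ gmap p '' closedBall 0 t := by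
  rintro ω ⟨hω, hωp⟩
  rw [mem_sphere_zero_iff_norm] at hω
  rw [mem_closedBall, dist_eq_norm] at hωp
  set K : Submodule ℝ (EuclideanSpace ℝ (Fin N)) := (ℝ ∙ p)ᗮ with hK
  set c : ℝ := inner ℝ p ω with hc
  set y : K := K.orthogonalProjectionOnto ω with hy
  have hdecomp : ω = c • p + (y : EuclideanSpace ℝ (Fin N)) := by
    have h1 := (Submodule.starProjection_add_starProjection_orthogonal (K := ℝ ∙ p) ω).symm
    have h2 : ((ℝ ∙ p).starProjection ω : EuclideanSpace ℝ (Fin N)) = c • p := by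
      rw [Submodule.starProjection_unit_singleton ℝ hp ω]
    rw [h2] at h1
    exact h1
  have hyorth : inner ℝ p (y : EuclideanSpace ℝ (Fin N)) = (0:ℝ) :=
    y.2 p (Submodule.mem_span_singleton_self p)
  have hpy : inner ℝ (c • p) ((y : EuclideanSpace ℝ (Fin N))) = (0:ℝ) := by
    rw [real_inner_smul_left, hyorth, mul_zero]
  have hcoe : ‖(y : EuclideanSpace ℝ (Fin N))‖ = ‖y‖ := rfl
  have hnorm : 1 = c^2 + ‖y‖^2 := by
    have h := norm_add_sq_real (c • p) ((y : EuclideanSpace ℝ (Fin N)))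
    rw [← hdecomp, hω, hpy, norm_smul, hp, hcoe] at h
    simp only [mul_one, mul_zero, add_zero] at h
    rw [Real.norm_eq_abs] at h
    nlinarith [h, sq_abs c]
  have hsub : ω - p = (c - 1) • p + (y : EuclideanSpace ℝ (Fin N)) := by
    rw [hdecomp]; module
  have hc2 : ‖ω - p‖^2 = (c-1)^2 + ‖y‖^2 := by
    have h := norm_add_sq_real ((c-1) • p) ((y : EuclideanSpace ℝ (Fin N)))
    rw [real_inner_smul_left, hyorth, mul_zero, norm_smul, hp, hcoe] at h
    rw [hsub, h]
    simp [Real.norm_eq_abs, sq_abs]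
  have ht2 : ‖ω - p‖^2 ≤ t^2 := pow_le_pow_left₀ (norm_nonneg _) hωp 2
  have hcge : 2 - 2*c ≤ t^2 := by nlinarith
  have hcpos : 0 ≤ c := by nlinarith
  have hyt : ‖y‖ ≤ t := by nlinarith [norm_nonneg y]
  refine ⟨y, by simpa [dist_zero_right] using hyt, ?_⟩
  show (y : EuclideanSpace ℝ (Fin N)) + Real.sqrt (1 - ‖y‖^2) • p = ω
  have hs : Real.sqrt (1 - ‖y‖^2) = c := by
    rw [show (1 : ℝ) - ‖y‖^2 = c^2 by linarith, Real.sqrt_sq hcpos]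
  rw [hs, hdecomp]
  abel

noncomputable def capC (N : ℕ) : ENNReal :=
  μH[((N:ℝ)-1)] (ball (0 : EuclideanSpace ℝ (Fin (N-1))) 1)

lemma capC_lt_top (hN : 2 ≤ N) : capC N < ⊤ := by
  have hdn : ((N:ℝ)-1) = (((N-1 : ℕ) : ℕ) : ℝ) := by
    have : (1:ℕ) ≤ N := Nat.one_le_of_lt hN
    push_cast [this]; ring
  rw [capC, hdn]
  have h : ((N-1 : ℕ):ℝ) = ((finrank ℝ (EuclideanSpace ℝ (Fin (N-1))) : ℕ) : ℝ) := by simp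
  rw [h]
  exact lt_of_le_of_lt (measure_mono ball_subset_closedBall)
    (isCompact_closedBall _ _).measure_lt_top

lemma cap_bound (hN : 2 ≤ N) (p : EuclideanSpace ℝ (Fin N)) (hp : ‖p‖ = 1) {t : ℝ} (ht0 : 0 ≤ t)
    (ht : t ≤ 3/4) :
    μH[((N:ℝ)-1)] (sphere (0 : EuclideanSpace ℝ (Fin N)) 1 ∩ closedBall p t)
      ≤ ENNReal.ofReal (3^(N-1) * t^(N-1)) * capC N := by
  have h1le : (1:ℕ) ≤ N := Nat.one_le_of_lt hN
  have hd0 : (0:ℝ) ≤ (N:ℝ) - 1 := by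
    have : (1:ℝ) ≤ (N:ℝ) := by exact_mod_cast h1le
    linarith
  have hdn : ((N:ℝ)-1) = ((N-1 : ℕ) : ℝ) := by push_cast [h1le]; ring
  have hp0 : p ≠ 0 := by intro h; rw [h, norm_zero] at hp; norm_num at hp
  set K : Submodule ℝ (EuclideanSpace ℝ (Fin N)) := (ℝ ∙ p)ᗮ
  calc μH[((N:ℝ)-1)] (sphere (0 : EuclideanSpace ℝ (Fin N)) 1 ∩ closedBall p t)
      ≤ μH[((N:ℝ)-1)] (gmap p '' closedBall 0 t) :=
        measure_mono (cap_subset p hp ht0 ht)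
    _ ≤ ((3:ℝ≥0) : ℝ≥0∞) ^ ((N:ℝ)-1) * μH[((N:ℝ)-1)] (closedBall (0:K) t) :=
        ((gmap_lip p hp).mono (closedBall_subset_closedBall ht)).hausdorffMeasure_image_le hd0
    _ = ((3:ℝ≥0) : ℝ≥0∞) ^ ((N:ℝ)-1) *
          μH[((N:ℝ)-1)] (closedBall (0 : EuclideanSpace ℝ (Fin (N-1))) t) := by
        congr 1
        haveI : Fact (finrank ℝ (EuclideanSpace ℝ (Fin N)) = (N-1)+1) := ⟨by simp; omega⟩
        have e := (OrthonormalBasis.fromOrthogonalSpanSingleton (𝕜 := ℝ) (N-1) hp0).repr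
        rw [← e.toIsometryEquiv.hausdorffMeasure_image]
        congr 1
        rw [e.toIsometryEquiv.image_closedBall]
        simp
    _ = ((3:ℝ≥0) : ℝ≥0∞) ^ ((N:ℝ)-1) * (ENNReal.ofReal (t ^ (N-1)) * capC N) := by
        congr 1
        rw [hdn]
        have h : ((N-1:ℕ):ℝ) = ((finrank ℝ (EuclideanSpace ℝ (Fin (N-1))) : ℕ) : ℝ) := by simp
        rw [capC, hdn, h]
        have := Measure.addHaar_closedBall
          (μ := (μH[((finrank ℝ (EuclideanSpace ℝ (Fin (N-1))) : ℕ) : ℝ)] :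
            Measure (EuclideanSpace ℝ (Fin (N-1))))) (0 : EuclideanSpace ℝ (Fin (N-1))) ht0
        simpa using this
    _ = ENNReal.ofReal (3^(N-1) * t^(N-1)) * capC N := by
        rw [hdn, ENNReal.ofReal_mul (by positivity), ← mul_assoc]
        congr 1
        congr 1
        rw [ENNReal.rpow_natCast, show ((3:ℝ≥0):ℝ≥0∞) = ENNReal.ofReal 3 by simp,
          ← ENNReal.ofReal_pow (by norm_num)]

noncomputable def Mseq (n : ℕ) (k : ℕ) : ℝ := ((k:ℝ)+1)^n * Real.exp (-(k:ℝ)^2/4)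

lemma Mseq_nonneg (n k : ℕ) : 0 ≤ Mseq n k := by
  unfold Mseq; positivity

lemma Mseq_summable (n : ℕ) : Summable (Mseq n) := by
  set q : ℝ := Real.exp (-(1/4)) with hq
  have hq0 : 0 < q := Real.exp_pos _
  have hq1 : q < 1 := Real.exp_lt_one_iff.mpr (by norm_num)
  have hs : Summable (fun k : ℕ => ((k:ℝ))^n * q^k) := by
    have := summable_pow_mul_geometric_of_norm_lt_one (R := ℝ) n (r := q)
      (by rw [norm_eq_abs, abs_of_pos hq0]; exact hq1)
    simpa using this
  have hs2 : Summable (fun k : ℕ => (((k+1):ℕ):ℝ)^n * q^(k+1)) :=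
    hs.comp_injective Nat.succ_injective
  apply Summable.of_nonneg_of_le (Mseq_nonneg n) _ (hs2.mul_left (Real.exp (1/4)))
  intro k
  unfold Mseq
  push_cast
  have h1 : Real.exp (-(k:ℝ)^2/4) ≤ Real.exp (1/4) * q^(k+1) := by
    rw [hq, ← Real.exp_nat_mul, ← Real.exp_add]
    apply Real.exp_le_exp.mpr
    have h2 : (k:ℝ) ≤ (k:ℝ)^2 := by exact_mod_cast Nat.cast_le.mpr (Nat.le_self_pow two_ne_zero k)
    push_cast
    nlinarith
  calc ((k:ℝ)+1)^n * Real.exp (-(k:ℝ)^2/4) ≤ ((k:ℝ)+1)^n * (Real.exp (1/4) * q^(k+1)) := by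
        apply mul_le_mul_of_nonneg_left h1 (by positivity)
    _ = Real.exp (1/4) * (((k:ℝ)+1)^n * q^(k+1)) := by ring

lemma sphere_fin {N : ℕ} (hN : 2 ≤ N) :
    μH[((N:ℝ)-1)] (sphere (0 : EuclideanSpace ℝ (Fin N)) 1) < ⊤ := by
  set S := sphere (0 : EuclideanSpace ℝ (Fin N)) 1
  have hcov : S ⊆ ⋃ p ∈ S, ball p (1/2) := fun p hp => mem_biUnion hp (by simp)
  obtain ⟨b, hbS, hbfin, hcov2⟩ :=
    (isCompact_sphere (0 : EuclideanSpace ℝ (Fin N)) 1).elim_finite_subcover_image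
      (fun p _ => isOpen_ball) hcov
  have hsub : S ⊆ ⋃ p ∈ hbfin.toFinset, (S ∩ closedBall p (1/2)) := by
    intro ω hω
    obtain ⟨p, hp, hball⟩ := by simpa using hcov2 hω
    exact mem_biUnion (hbfin.mem_toFinset.mpr hp)
      ⟨hω, by rw [mem_closedBall]; rw [show (1:ℝ)/2 = 2⁻¹ by norm_num]; exact le_of_lt hball⟩
  calc μH[((N:ℝ)-1)] S ≤ μH[((N:ℝ)-1)] (⋃ p ∈ hbfin.toFinset, (S ∩ closedBall p (1/2))) :=
        measure_mono hsub
    _ ≤ ∑ p ∈ hbfin.toFinset, μH[((N:ℝ)-1)] (S ∩ closedBall p (1/2)) :=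
        measure_biUnion_finset_le _ _
    _ < ⊤ := by
        apply ENNReal.sum_lt_top.mpr
        intro p hp
        have hpS : ‖p‖ = 1 := by
          have := hbS (hbfin.mem_toFinset.mp hp)
          simpa [S, mem_sphere_zero_iff_norm] using this
        exact lt_of_le_of_lt (cap_bound hN p hpS (by norm_num) (by norm_num))
          (ENNReal.mul_lt_top ENNReal.ofReal_lt_top (capC_lt_top hN))

lemma inner_eq {N : ℕ} (x ω : EuclideanSpace ℝ (Fin N)) (hx : x ≠ 0) (hω : ‖ω‖ = 1) :
    (inner ℝ x ω : ℝ) = ‖x‖ - ‖x‖ * (dist ω (‖x‖⁻¹ • x))^2 / 2 := by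
  set r := ‖x‖ with hrd
  have hr0 : 0 < r := norm_pos_iff.mpr hx
  set p := r⁻¹ • x with hpd
  have hp : ‖p‖ = 1 := by
    rw [hpd, norm_smul, norm_inv, norm_norm, ← hrd, inv_mul_cancel₀ hr0.ne']
  have hxp : x = r • p := by
    rw [hpd, smul_smul, mul_inv_cancel₀ hr0.ne', one_smul]
  have hd2 : (dist ω p)^2 = 2 - 2 * (inner ℝ p ω : ℝ) := by
    rw [dist_eq_norm]
    have := @norm_sub_sq_real (EuclideanSpace ℝ (Fin N)) _ _ ω p
    rw [this, hω, hp, real_inner_comm ω p]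
    ring
  have hxω : (inner ℝ x ω : ℝ) = r * (inner ℝ p ω : ℝ) := by
    rw [hxp, real_inner_smul_left]
  rw [hxω]
  nlinarith [hd2]

lemma integrableOn_exp_sphere {N : ℕ} (hN : 2 ≤ N) (x : EuclideanSpace ℝ (Fin N)) :
    IntegrableOn (fun ω => Real.exp (inner ℝ x ω : ℝ))
      (sphere (0 : EuclideanSpace ℝ (Fin N)) 1) (μH[((N:ℝ)-1)]) := by
  set S := sphere (0 : EuclideanSpace ℝ (Fin N)) 1
  set μ : Measure (EuclideanSpace ℝ (Fin N)) := μH[((N:ℝ)-1)]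
  have hcont : Continuous (fun ω : EuclideanSpace ℝ (Fin N) => Real.exp (inner ℝ x ω : ℝ)) :=
    Real.continuous_exp.comp (continuous_const.inner continuous_id)
  apply Integrable.mono' (g := fun _ => Real.exp ‖x‖)
  · exact integrable_const_iff.mpr (Or.inr (by
      rw [isFiniteMeasure_restrict]; exact (sphere_fin hN).ne))
  · exact hcont.aestronglyMeasurable
  · refine (ae_restrict_iff' (isClosed_sphere.measurableSet)).mpr (ae_of_all _ (fun ω hω => ?_))
    rw [Real.norm_eq_abs, abs_of_pos (Real.exp_pos _), Real.exp_le_exp]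
    calc (inner ℝ x ω : ℝ) ≤ ‖x‖ * ‖ω‖ := real_inner_le_norm x ω
      _ = ‖x‖ := by rw [mem_sphere_zero_iff_norm.mp hω, mul_one]

set_option maxHeartbeats 2000000 in
lemma big_r {N : ℕ} (hN : 2 ≤ N) (x : EuclideanSpace ℝ (Fin N)) (hr : 15 ≤ ‖x‖) :
    ∫ ω in sphere (0 : EuclideanSpace ℝ (Fin N)) 1, Real.exp (inner ℝ x ω : ℝ) ∂(μH[((N:ℝ)-1)])
      ≤ (3^(N-1) * (capC N).toReal * (∑' k, Mseq (N-1) k)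
          + (μH[((N:ℝ)-1)] (sphere (0:EuclideanSpace ℝ (Fin N)) 1)).toReal * (8*(N-1):ℝ)^(N-1))
        * Real.exp ‖x‖ * (1+‖x‖) ^ (-((N:ℝ)-1)/2) := by
  set n := N - 1 with hn
  have hn1 : 1 ≤ n := by omega
  have hnr : (n:ℝ) = (N:ℝ) - 1 := by rw [hn]; push_cast [Nat.one_le_of_lt hN]; ring
  set S := sphere (0 : EuclideanSpace ℝ (Fin N)) 1 with hS
  set μ : Measure (EuclideanSpace ℝ (Fin N)) := μH[((N:ℝ)-1)] with hμ
  set f : EuclideanSpace ℝ (Fin N) → ℝ := fun ω => Real.exp (inner ℝ x ω : ℝ) with hf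
  set r := ‖x‖ with hrd
  have hr0 : (0:ℝ) < r := by linarith
  have hx0 : x ≠ 0 := by intro h; rw [hrd, h, norm_zero] at hr0; exact lt_irrefl _ hr0
  set p := r⁻¹ • x with hpd
  have hp : ‖p‖ = 1 := by
    rw [hpd, norm_smul, norm_inv, norm_norm, ← hrd, inv_mul_cancel₀ hr0.ne']
  have hmS : μ S < ⊤ := sphere_fin hN
  set cC := (capC N).toReal with hcC
  set mS := (μ S).toReal with hmSd
  set M := ∑' k, Mseq n k with hM
  have hM0 : 0 ≤ M := tsum_nonneg (Mseq_nonneg n)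
  have hcC0 : 0 ≤ cC := ENNReal.toReal_nonneg
  have hmS0 : 0 ≤ mS := ENNReal.toReal_nonneg
  -- delta
  set δ := (1+r) ^ (-(2⁻¹:ℝ)) with hδd
  have h1r : (0:ℝ) < 1 + r := by linarith
  have hδ0 : 0 < δ := Real.rpow_pos_of_pos h1r _
  have hδ2 : δ^2 = (1+r)⁻¹ := by
    rw [hδd, ← Real.rpow_natCast ((1+r) ^ (-(2⁻¹:ℝ))) 2, ← Real.rpow_mul h1r.le]
    norm_num
    exact Real.rpow_neg_one _
  have hδ : δ ≤ 1/4 := by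
    have h16 : (16:ℝ) ≤ 1 + r := by linarith
    have : δ^2 ≤ (1/4:ℝ)^2 := by
      rw [hδ2]
      rw [show ((1/4:ℝ))^2 = 16⁻¹ by norm_num]
      exact inv_anti₀ (by norm_num) h16
    nlinarith [hδ0.le]
  have hrδ2 : 1/2 ≤ r * δ^2 := by
    rw [hδ2, ← div_eq_mul_inv, le_div_iff₀ h1r]
    linarith
  -- K
  set Kn := ⌈1/(2*δ)⌉₊ with hKnd
  have hKl : 1/2 ≤ (Kn:ℝ) * δ := by
    have := Nat.le_ceil (1/(2*δ))
    calc (1/2 : ℝ) = (1/(2*δ)) * δ := by field_simp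
      _ ≤ (Kn:ℝ) * δ := by apply mul_le_mul_of_nonneg_right this hδ0.le
  have hKu : (Kn:ℝ) * δ ≤ 3/4 := by
    have h1 : (Kn:ℝ) < 1/(2*δ) + 1 := by
      apply Nat.ceil_lt_add_one (by positivity)
    calc (Kn:ℝ) * δ ≤ (1/(2*δ) + 1) * δ := by
          apply mul_le_mul_of_nonneg_right h1.le hδ0.le
      _ = 1/2 + δ := by field_simp
      _ ≤ 3/4 := by linarith
  -- the pieces
  set T : ℕ → Set (EuclideanSpace ℝ (Fin N)) :=
    fun k => S ∩ {ω | dist ω p ∈ Ico ((k:ℝ)*δ) (((k:ℝ)+1)*δ)} with hT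
  set B : Set (EuclideanSpace ℝ (Fin N)) := S ∩ {ω | (Kn:ℝ)*δ ≤ dist ω p} with hB
  have hdistm : Measurable (fun ω : EuclideanSpace ℝ (Fin N) => dist ω p) :=
    (continuous_id.dist continuous_const).measurable
  have hTm : ∀ k, MeasurableSet (T k) := fun k =>
    isClosed_sphere.measurableSet.inter (hdistm measurableSet_Ico)
  have hBm : MeasurableSet B := isClosed_sphere.measurableSet.inter (hdistm measurableSet_Ici)
  have hfS : IntegrableOn f S μ := integrableOn_exp_sphere hN x
  have hTsub : ∀ k, T k ⊆ S := fun k => inter_subset_left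
  have hBsub : B ⊆ S := inter_subset_left
  -- covering
  have hcover : S = (⋃ k ∈ Finset.range Kn, T k) ∪ B := by
    apply Subset.antisymm
    · intro ω hω
      rcases le_or_gt ((Kn:ℝ)*δ) (dist ω p) with h | h
      · exact Or.inr ⟨hω, h⟩
      · left
        set k := ⌊dist ω p / δ⌋₊ with hk
        have hd0 : 0 ≤ dist ω p := dist_nonneg
        have hk1 : (k:ℝ) * δ ≤ dist ω p := by
          rw [hk]
          calc (⌊dist ω p / δ⌋₊ : ℝ) * δ ≤ (dist ω p / δ) * δ :=
                mul_le_mul_of_nonneg_right (Nat.floor_le (by positivity)) hδ0.le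
            _ = dist ω p := by field_simp
        have hk2 : dist ω p < ((k:ℝ)+1) * δ := by
          rw [hk]
          have := Nat.lt_floor_add_one (dist ω p / δ)
          calc dist ω p = (dist ω p / δ) * δ := by field_simp
            _ < ((⌊dist ω p / δ⌋₊:ℝ)+1) * δ := by
                apply mul_lt_mul_of_pos_right this hδ0
        have hkK : k < Kn := by
          have h2 : dist ω p / δ < (Kn:ℝ) := by
            rw [div_lt_iff₀ hδ0]; exact h
          exact_mod_cast Nat.floor_lt (by positivity) |>.mpr h2
        exact mem_biUnion (Finset.mem_range.mpr hkK) ⟨hω, hk1, hk2⟩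
    · rintro ω (hω | hω)
      · simp only [mem_iUnion] at hω
        obtain ⟨k, _, hk⟩ := hω
        exact hk.1
      · exact hω.1
  have hdisjTB : Disjoint (⋃ k ∈ Finset.range Kn, T k) B := by
    rw [disjoint_iff_inter_eq_empty]
    ext ω
    simp only [mem_inter_iff, mem_iUnion, mem_empty_iff_false, iff_false, not_and]
    rintro ⟨k, hkK, hkk⟩ hBω
    have h1 : dist ω p < ((k:ℝ)+1)*δ := hkk.2.2
    have h2 : (Kn:ℝ)*δ ≤ dist ω p := hBω.2
    have h3 : ((k:ℝ)+1) ≤ (Kn:ℝ) := by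
      exact_mod_cast Nat.succ_le_of_lt (Finset.mem_range.mp hkK)
    nlinarith [hδ0]
  have hpairT : (↑(Finset.range Kn) : Set ℕ).Pairwise (Function.onFun Disjoint T) := by
    intro i _ j _ hij
    apply Set.disjoint_left.mpr
    rintro ω ⟨_, hi1, hi2⟩ ⟨_, hj1, hj2⟩
    rcases lt_or_gt_of_ne hij with h | h
    · have h4 : ((i:ℝ)+1) ≤ (j:ℝ) := by exact_mod_cast h
      have hx1 : ((i:ℝ)+1)*δ ≤ (j:ℝ)*δ := mul_le_mul_of_nonneg_right h4 hδ0.le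
      exact (hi2.trans_le (hx1.trans hj1)).false
    · have h4 : ((j:ℝ)+1) ≤ (i:ℝ) := by exact_mod_cast h
      have hx1 : ((j:ℝ)+1)*δ ≤ (i:ℝ)*δ := mul_le_mul_of_nonneg_right h4 hδ0.le
      exact (hj2.trans_le (hx1.trans hi1)).false
  -- splitting
  have hsplit : ∫ ω in S, f ω ∂μ
      = ∑ k ∈ Finset.range Kn, ∫ ω in T k, f ω ∂μ + ∫ ω in B, f ω ∂μ := by
    conv_lhs => rw [hcover]
    rw [setIntegral_union hdisjTB hBm
      ((hfS.mono_set (by rw [hcover]; exact subset_union_left)))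
      (hfS.mono_set hBsub)]
    congr 1
    exact integral_biUnion_finset (Finset.range Kn) (fun k _ => hTm k) hpairT
      (fun k _ => hfS.mono_set (hTsub k))
  -- pointwise value
  have hval : ∀ ω ∈ S, f ω = Real.exp (r - r * (dist ω p)^2 / 2) := by
    intro ω hω
    have h := inner_eq x ω hx0 (mem_sphere_zero_iff_norm.mp hω)
    rw [← hrd, ← hpd] at h
    simp only [hf]
    rw [h]
  -- bound on each T k
  have hTbound : ∀ k ∈ Finset.range Kn, ∫ ω in T k, f ω ∂μ
      ≤ (Real.exp r * 3^n * cC * δ^n) * Mseq n k := by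
    intro k hk
    have hkK : k < Kn := Finset.mem_range.mp hk
    have hμTk : μ (T k) < ⊤ := lt_of_le_of_lt (measure_mono (hTsub k)) hmS
    have hptw : ∀ ω ∈ T k, f ω ≤ Real.exp r * Real.exp (-(k:ℝ)^2/4) := by
      rintro ω ⟨hωS, hd1, _⟩
      rw [hval ω hωS, ← Real.exp_add, Real.exp_le_exp]
      have h1 : (k:ℝ)*δ ≤ dist ω p := hd1
      have h2 : ((k:ℝ)*δ)^2 ≤ (dist ω p)^2 :=
        pow_le_pow_left₀ (by positivity) h1 2
      have h3 : (k:ℝ)^2/4 ≤ r * ((k:ℝ)*δ)^2 / 2 := by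
        have : (k:ℝ)^2 * (1/2) ≤ (k:ℝ)^2 * (r * δ^2) := by
          apply mul_le_mul_of_nonneg_left hrδ2 (by positivity)
        nlinarith
      nlinarith [mul_le_mul_of_nonneg_left h2 hr0.le]
    have hconst : ∫ ω in T k, f ω ∂μ
        ≤ (Real.exp r * Real.exp (-(k:ℝ)^2/4)) * (μ (T k)).toReal := by
      calc ∫ ω in T k, f ω ∂μ
          ≤ ∫ _ω in T k, (Real.exp r * Real.exp (-(k:ℝ)^2/4)) ∂μ := by
            apply setIntegral_mono_on (hfS.mono_set (hTsub k))
              (integrableOn_const hμTk.ne) (hTm k) hptw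
        _ = (μ (T k)).toReal * (Real.exp r * Real.exp (-(k:ℝ)^2/4)) := by
            rw [setIntegral_const]; rfl
        _ = (Real.exp r * Real.exp (-(k:ℝ)^2/4)) * (μ (T k)).toReal := by ring
    have hμbound : (μ (T k)).toReal ≤ 3^n * (((k:ℝ)+1)*δ)^n * cC := by
      have hsub2 : T k ⊆ S ∩ closedBall p (((k:ℝ)+1)*δ) := by
        rintro ω ⟨hωS, _, hd2⟩
        exact ⟨hωS, mem_closedBall.mpr (le_of_lt hd2)⟩
      have ht34 : ((k:ℝ)+1)*δ ≤ 3/4 := by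
        have : ((k:ℝ)+1) ≤ (Kn:ℝ) := by exact_mod_cast Nat.succ_le_of_lt hkK
        calc ((k:ℝ)+1)*δ ≤ (Kn:ℝ)*δ := mul_le_mul_of_nonneg_right this hδ0.le
          _ ≤ 3/4 := hKu
      have hcb := cap_bound hN p hp (t := ((k:ℝ)+1)*δ) (by positivity) ht34
      have hle : μ (T k) ≤ ENNReal.ofReal (3^(N-1) * (((k:ℝ)+1)*δ)^(N-1)) * capC N :=
        le_trans (measure_mono hsub2) hcb
      have := ENNReal.toReal_mono (by
        exact ENNReal.mul_ne_top ENNReal.ofReal_ne_top (capC_lt_top hN).ne) hle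
      rw [ENNReal.toReal_mul, ENNReal.toReal_ofReal (by positivity)] at this
      calc (μ (T k)).toReal ≤ 3^(N-1) * (((k:ℝ)+1)*δ)^(N-1) * cC := this
        _ = 3^n * (((k:ℝ)+1)*δ)^n * cC := by rw [hn]
    calc ∫ ω in T k, f ω ∂μ ≤ (Real.exp r * Real.exp (-(k:ℝ)^2/4)) * (μ (T k)).toReal := hconst
      _ ≤ (Real.exp r * Real.exp (-(k:ℝ)^2/4)) * (3^n * (((k:ℝ)+1)*δ)^n * cC) := by
          apply mul_le_mul_of_nonneg_left hμbound (by positivity)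
      _ = (Real.exp r * 3^n * cC * δ^n) * Mseq n k := by
          rw [Mseq, mul_pow]
          ring
  -- sum over k
  have hsum : ∑ k ∈ Finset.range Kn, ∫ ω in T k, f ω ∂μ
      ≤ (Real.exp r * 3^n * cC * δ^n) * M := by
    calc ∑ k ∈ Finset.range Kn, ∫ ω in T k, f ω ∂μ
        ≤ ∑ k ∈ Finset.range Kn, (Real.exp r * 3^n * cC * δ^n) * Mseq n k :=
          Finset.sum_le_sum hTbound
      _ = (Real.exp r * 3^n * cC * δ^n) * ∑ k ∈ Finset.range Kn, Mseq n k := by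
          rw [Finset.mul_sum]
      _ ≤ (Real.exp r * 3^n * cC * δ^n) * M := by
          apply mul_le_mul_of_nonneg_left _ (by positivity)
          exact Summable.sum_le_tsum (Finset.range Kn) (fun k _ => Mseq_nonneg n k) (Mseq_summable n)
  -- bound on B
  have hBbound : ∫ ω in B, f ω ∂μ ≤ (Real.exp r * Real.exp (-(r/8))) * mS := by
    have hμB : μ B < ⊤ := lt_of_le_of_lt (measure_mono hBsub) hmS
    have hptw : ∀ ω ∈ B, f ω ≤ Real.exp r * Real.exp (-(r/8)) := by
      rintro ω ⟨hωS, hd⟩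
      rw [hval ω hωS, ← Real.exp_add, Real.exp_le_exp]
      have h1 : (1/2:ℝ) ≤ dist ω p := le_trans hKl hd
      have h2 : (1/2:ℝ)^2 ≤ (dist ω p)^2 := pow_le_pow_left₀ (by norm_num) h1 2
      nlinarith [mul_le_mul_of_nonneg_left h2 hr0.le]
    calc ∫ ω in B, f ω ∂μ
        ≤ ∫ _ω in B, (Real.exp r * Real.exp (-(r/8))) ∂μ :=
          setIntegral_mono_on (hfS.mono_set hBsub)
            (integrableOn_const hμB.ne) hBm hptw
      _ = (μ B).toReal * (Real.exp r * Real.exp (-(r/8))) := by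
          rw [setIntegral_const]; rfl
      _ ≤ mS * (Real.exp r * Real.exp (-(r/8))) := by
          apply mul_le_mul_of_nonneg_right _ (by positivity)
          exact ENNReal.toReal_mono hmS.ne (measure_mono hBsub)
      _ = (Real.exp r * Real.exp (-(r/8))) * mS := by ring
  -- delta power identity
  have hδn : δ^n = (1+r) ^ (-((N:ℝ)-1)/2) := by
    rw [hδd, ← Real.rpow_natCast ((1+r) ^ (-(2⁻¹:ℝ))) n, ← Real.rpow_mul h1r.le]
    congr 1
    rw [hnr]; ring
  -- exp decay bound
  have hexp : Real.exp (-(r/8)) ≤ (8*(n:ℝ))^n * (1+r) ^ (-((N:ℝ)-1)/2) := by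
    have hn0 : (0:ℝ) < (n:ℝ) := by exact_mod_cast hn1
    have hbase : 1 + r ≤ 8*(n:ℝ) * Real.exp (r/(8*(n:ℝ))) := by
      have h1 : 1 + r/(8*(n:ℝ)) ≤ Real.exp (r/(8*(n:ℝ))) := by
        have := Real.add_one_le_exp (r/(8*(n:ℝ)))
        linarith
      have h2 : 8*(n:ℝ) * (1 + r/(8*(n:ℝ))) = 8*(n:ℝ) + r := by field_simp
      have h3 : (1:ℝ) ≤ (n:ℝ) := by exact_mod_cast hn1
      calc 1 + r ≤ 8*(n:ℝ) + r := by linarith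
        _ = 8*(n:ℝ) * (1 + r/(8*(n:ℝ))) := h2.symm
        _ ≤ 8*(n:ℝ) * Real.exp (r/(8*(n:ℝ))) := by
            apply mul_le_mul_of_nonneg_left h1 (by positivity)
    have hpow : (1+r)^n ≤ (8*(n:ℝ))^n * Real.exp (r/8) := by
      calc (1+r)^n ≤ (8*(n:ℝ) * Real.exp (r/(8*(n:ℝ))))^n :=
            pow_le_pow_left₀ h1r.le hbase n
        _ = (8*(n:ℝ))^n * (Real.exp (r/(8*(n:ℝ))))^n := mul_pow _ _ _
        _ = (8*(n:ℝ))^n * Real.exp (r/8) := by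
            rw [← Real.exp_nat_mul]
            congr 1
            field_simp
    have hrpow : (1+r) ^ (((N:ℝ)-1)/2) ≤ (1+r)^n := by
      rw [← Real.rpow_natCast (1+r) n]
      apply Real.rpow_le_rpow_of_exponent_le (by linarith)
      rw [hnr]
      have : (0:ℝ) ≤ (N:ℝ)-1 := by rw [← hnr]; positivity
      linarith
    have hkey : (1+r) ^ (((N:ℝ)-1)/2) * Real.exp (-(r/8)) ≤ (8*(n:ℝ))^n := by
      have he : Real.exp (-(r/8)) = (Real.exp (r/8))⁻¹ := Real.exp_neg _
      rw [he]
      rw [mul_inv_le_iff₀ (Real.exp_pos _)]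
      calc (1+r) ^ (((N:ℝ)-1)/2) ≤ (1+r)^n := hrpow
        _ ≤ (8*(n:ℝ))^n * Real.exp (r/8) := hpow
    have hposrp : (0:ℝ) < (1+r) ^ (((N:ℝ)-1)/2) := Real.rpow_pos_of_pos h1r _
    have h5 : Real.exp (-(r/8)) ≤ (8*(n:ℝ))^n / (1+r) ^ (((N:ℝ)-1)/2) := by
      rw [le_div_iff₀ hposrp, mul_comm]
      exact hkey
    rw [show -((N:ℝ)-1)/2 = -(((N:ℝ)-1)/2) by ring, Real.rpow_neg h1r.le]
    rw [div_eq_mul_inv] at h5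
    exact h5
  -- combine
  have hfinal : ∫ ω in S, f ω ∂μ
      ≤ (3^n * cC * M + mS * (8*((N:ℝ)-1))^n) * Real.exp r * (1+r) ^ (-((N:ℝ)-1)/2) := by
    rw [hsplit]
    have h1 : (Real.exp r * 3^n * cC * δ^n) * M
        = (3^n * cC * M) * Real.exp r * (1+r) ^ (-((N:ℝ)-1)/2) := by
      rw [hδn]; ring
    have h2 : (Real.exp r * Real.exp (-(r/8))) * mS
        ≤ (mS * (8*((N:ℝ)-1))^n) * Real.exp r * (1+r) ^ (-((N:ℝ)-1)/2) := by
      rw [show 8*((N:ℝ)-1) = 8*(n:ℝ) by rw [hnr]]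
      calc (Real.exp r * Real.exp (-(r/8))) * mS
          ≤ (Real.exp r * ((8*(n:ℝ))^n * (1+r) ^ (-((N:ℝ)-1)/2))) * mS := by
            apply mul_le_mul_of_nonneg_right _ hmS0
            exact mul_le_mul_of_nonneg_left hexp (Real.exp_pos _).le
        _ = (mS * (8*(n:ℝ))^n) * Real.exp r * (1+r) ^ (-((N:ℝ)-1)/2) := by ring
    calc ∑ k ∈ Finset.range Kn, ∫ ω in T k, f ω ∂μ + ∫ ω in B, f ω ∂μ
        ≤ (Real.exp r * 3^n * cC * δ^n) * M + (Real.exp r * Real.exp (-(r/8))) * mS :=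
          add_le_add hsum hBbound
      _ ≤ (3^n * cC * M) * Real.exp r * (1+r) ^ (-((N:ℝ)-1)/2)
            + (mS * (8*((N:ℝ)-1))^n) * Real.exp r * (1+r) ^ (-((N:ℝ)-1)/2) := by
          rw [← h1]; exact add_le_add le_rfl h2
      _ = (3^n * cC * M + mS * (8*((N:ℝ)-1))^n) * Real.exp r * (1+r) ^ (-((N:ℝ)-1)/2) := by
          ring
  exact hfinal


end YZaux

section YZmain
open Metric Module
open scoped NNReal ENNReal

theorem stmt_10 (N : ℕ) (hN : 2 ≤ N)
    (φ : EuclideanSpace ℝ (Fin N) → ℝ)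
    (hφ : ∀ x, φ x = ∫ ω in Metric.sphere (0 : EuclideanSpace ℝ (Fin N)) 1,
        Real.exp (inner ℝ x ω) ∂(μH[(N : ℝ) - 1])) :
    ∃ C > (0:ℝ), ∀ x, φ x ≤ C * Real.exp ‖x‖ * (1 + ‖x‖) ^ (-((N : ℝ) - 1) / 2) := by
  set S := sphere (0 : EuclideanSpace ℝ (Fin N)) 1 with hS
  set μ : Measure (EuclideanSpace ℝ (Fin N)) := μH[((N:ℝ)-1)] with hμ
  set mS := (μ S).toReal with hmS
  have hmS0 : 0 ≤ mS := ENNReal.toReal_nonneg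
  have hM0 : 0 ≤ ∑' k, Mseq (N-1) k := tsum_nonneg (Mseq_nonneg (N-1))
  set Cbig := 3^(N-1) * (capC N).toReal * (∑' k, Mseq (N-1) k)
      + mS * (8*((N:ℝ)-1))^(N-1) with hCbig
  set Csmall := mS * (16:ℝ) ^ (((N:ℝ)-1)/2) with hCsmall
  have hd0 : (0:ℝ) ≤ ((N:ℝ)-1)/2 := by
    have : (2:ℝ) ≤ (N:ℝ) := by exact_mod_cast hN
    linarith
  have hCbig0 : 0 ≤ Cbig := by
    apply add_nonneg
    · apply mul_nonneg (mul_nonneg (by positivity) ENNReal.toReal_nonneg) hM0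
    · apply mul_nonneg hmS0
      apply pow_nonneg
      have h1N : (1:ℝ) ≤ (N:ℝ) := by exact_mod_cast Nat.one_le_of_lt hN
      linarith
  have hCsmall0 : 0 ≤ Csmall := mul_nonneg hmS0 (by positivity)
  refine ⟨Cbig + Csmall + 1, by linarith, fun x => ?_⟩
  have hrp0 : (0:ℝ) < (1 + ‖x‖) ^ (-((N:ℝ)-1)/2) :=
    Real.rpow_pos_of_pos (by positivity) _
  have hexp0 : (0:ℝ) < Real.exp ‖x‖ := Real.exp_pos _
  rcases le_or_gt 15 ‖x‖ with hr | hr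
  · -- large x
    calc φ x ≤ Cbig * Real.exp ‖x‖ * (1 + ‖x‖) ^ (-((N:ℝ)-1)/2) := by
          rw [hφ x]
          have := big_r hN x hr
          rw [hCbig, hmS]
          exact this
      _ ≤ (Cbig + Csmall + 1) * Real.exp ‖x‖ * (1 + ‖x‖) ^ (-((N:ℝ)-1)/2) := by
          apply mul_le_mul_of_nonneg_right _ hrp0.le
          apply mul_le_mul_of_nonneg_right _ hexp0.le
          linarith
  · -- small x
    have hfS : IntegrableOn (fun ω => Real.exp (inner ℝ x ω : ℝ)) S μ :=
      integrableOn_exp_sphere hN x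
    have hmStop : μ S < ⊤ := sphere_fin hN
    have hsmall : φ x ≤ mS * Real.exp ‖x‖ := by
      rw [hφ x]
      calc ∫ ω in S, Real.exp (inner ℝ x ω : ℝ) ∂μ
          ≤ ∫ _ω in S, Real.exp ‖x‖ ∂μ := by
            apply setIntegral_mono_on hfS (integrableOn_const hmStop.ne)
              isClosed_sphere.measurableSet
            intro ω hω
            rw [Real.exp_le_exp]
            calc (inner ℝ x ω : ℝ) ≤ ‖x‖ * ‖ω‖ := real_inner_le_norm x ω
              _ = ‖x‖ := by rw [mem_sphere_zero_iff_norm.mp hω, mul_one]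
        _ = mS * Real.exp ‖x‖ := by rw [setIntegral_const]; rfl
    have h16 : (1 + ‖x‖) ^ (((N:ℝ)-1)/2) ≤ (16:ℝ) ^ (((N:ℝ)-1)/2) :=
      Real.rpow_le_rpow (by positivity) (by linarith) hd0
    have ha : (0:ℝ) < (1 + ‖x‖) ^ (((N:ℝ)-1)/2) := Real.rpow_pos_of_pos (by positivity) _
    have hinv : (1 + ‖x‖) ^ (-((N:ℝ)-1)/2) = ((1 + ‖x‖) ^ (((N:ℝ)-1)/2))⁻¹ := by
      rw [show -((N:ℝ)-1)/2 = -(((N:ℝ)-1)/2) by ring, Real.rpow_neg (by positivity)]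
    have hdiv : (1:ℝ) ≤ (16:ℝ) ^ (((N:ℝ)-1)/2) * ((1 + ‖x‖) ^ (((N:ℝ)-1)/2))⁻¹ := by
      rw [← div_eq_mul_inv]
      exact (one_le_div ha).mpr h16
    calc φ x ≤ mS * Real.exp ‖x‖ := hsmall
      _ ≤ Csmall * Real.exp ‖x‖ * (1 + ‖x‖) ^ (-((N:ℝ)-1)/2) := by
          rw [hCsmall, hinv]
          have : mS ≤ mS * ((16:ℝ) ^ (((N:ℝ)-1)/2) * ((1 + ‖x‖) ^ (((N:ℝ)-1)/2))⁻¹) := by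
            nlinarith [hdiv, hmS0]
          calc mS * Real.exp ‖x‖
              ≤ (mS * ((16:ℝ) ^ (((N:ℝ)-1)/2) * ((1 + ‖x‖) ^ (((N:ℝ)-1)/2))⁻¹)) * Real.exp ‖x‖ :=
                mul_le_mul_of_nonneg_right this hexp0.le
            _ = mS * (16:ℝ) ^ (((N:ℝ)-1)/2) * Real.exp ‖x‖ * ((1 + ‖x‖) ^ (((N:ℝ)-1)/2))⁻¹ := by
                ring
      _ ≤ (Cbig + Csmall + 1) * Real.exp ‖x‖ * (1 + ‖x‖) ^ (-((N:ℝ)-1)/2) := by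
          apply mul_le_mul_of_nonneg_right _ hrp0.le
          apply mul_le_mul_of_nonneg_right _ hexp0.le
          linarith

end YZmain
end
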